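/- arXiv:2210.17550 — 2 statements merged into one kernel-verified Lean document; each statement's English description precedes it below -/
import Mathlib

section
/- Let F : ℝⁿ → ℝ be convex, differentiable, and L-smooth (i.e., its gradient is L-Lipschitz). Let H : ℝⁿ → ℝⁿ be monotone, i.e., ⟨H(z) - H(z'), z - z'⟩ ≥ 0 for all z, z'. Fix α ∈ (0,1] and points z_ag, z_md, z_half, z_k, w with z_md = (1-α) z_ag + α z_k and define z_ag' = (1-α) z_ag + α z_half. Define the gap function V(z, w) = F(z) - F(w) + ⟨H(w), z - w⟩. Then V(z_ag', w) - (1-α) V(z_ag, w) ≤ α ⟨∇F(z_md) + H(z_half), z_half - w⟩ + (L α²/2)‖z_half - z_k‖². -/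
open RealInnerProductSpace

variable {n : ℕ}

-- derivative of the path t ↦ x + t • v composed with F
lemma line_hasDerivAt (F : EuclideanSpace ℝ (Fin n) → ℝ)
    (gradF : EuclideanSpace ℝ (Fin n) → EuclideanSpace ℝ (Fin n))
    (hdiff : ∀ x, HasGradientAt F (gradF x) x)
    (x v : EuclideanSpace ℝ (Fin n)) (t : ℝ) :
    HasDerivAt (fun s : ℝ => F (x + s • v)) ⟪gradF (x + t • v), v⟫ t := by
  have hc : HasDerivAt (fun s : ℝ => x + s • v) v t := by
    simpa using ((hasDerivAt_id t).smul_const v).const_add x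
  have hF := (hasGradientAt_iff_hasFDerivAt.mp (hdiff (x + t • v)))
  have := hF.comp_hasDerivAt t hc
  simp [InnerProductSpace.toDual_apply_apply] at this
  exact this

-- convexity lower bound
lemma convex_lb (F : EuclideanSpace ℝ (Fin n) → ℝ)
    (gradF : EuclideanSpace ℝ (Fin n) → EuclideanSpace ℝ (Fin n))
    (hdiff : ∀ x, HasGradientAt F (gradF x) x)
    (hconv : ConvexOn ℝ Set.univ F)
    (x y : EuclideanSpace ℝ (Fin n)) :
    F x + ⟪gradF x, y - x⟫ ≤ F y := by
  set v := y - x with hv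
  have hφ : ∀ t : ℝ, HasDerivAt (fun s : ℝ => F (x + s • v)) ⟪gradF (x + t • v), v⟫ t :=
    line_hasDerivAt F gradF hdiff x v
  have hφconv : ConvexOn ℝ Set.univ (fun s : ℝ => F (x + s • v)) := by
    have h := hconv.comp_affineMap (AffineMap.lineMap x y : ℝ →ᵃ[ℝ] _)
    have he : (F ∘ (AffineMap.lineMap x y : ℝ →ᵃ[ℝ] _)) = fun s : ℝ => F (x + s • v) := by
      funext s
      rw [Function.comp_apply, AffineMap.lineMap_apply, hv, vsub_eq_sub, vadd_eq_add, add_comm]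
    rw [he] at h
    simpa using h
  have h01 : (0:ℝ) < 1 := one_pos
  have hφ0 : HasDerivAt (fun s : ℝ => F (x + s • v)) ⟪gradF x, v⟫ 0 := by
    have := hφ 0
    rwa [zero_smul, add_zero] at this
  have hkey := hφconv.le_slope_of_hasDerivAt (Set.mem_univ 0) (Set.mem_univ 1) h01 hφ0
  have hs : slope (fun s : ℝ => F (x + s • v)) 0 1 = F y - F x := by
    rw [slope_def_field]
    have : x + (1:ℝ) • v = y := by rw [one_smul, hv]; abel
    rw [this]
    simp
  rw [hs] at hkey
  linarith [hkey]

-- descent lemma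
lemma descent (F : EuclideanSpace ℝ (Fin n) → ℝ)
    (gradF : EuclideanSpace ℝ (Fin n) → EuclideanSpace ℝ (Fin n))
    (L : ℝ) (hL : 0 < L)
    (hdiff : ∀ x, HasGradientAt F (gradF x) x)
    (hsmooth : ∀ x y, ‖gradF x - gradF y‖ ≤ L * ‖x - y‖)
    (x y : EuclideanSpace ℝ (Fin n)) :
    F y ≤ F x + ⟪gradF x, y - x⟫ + L / 2 * ‖y - x‖^2 := by
  set v := y - x with hv
  set ψ : ℝ → ℝ := fun t => F (x + t • v) - t * ⟪gradF x, v⟫ - L * t^2 / 2 * ‖v‖^2 with hψ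
  have hψ' : ∀ t : ℝ, HasDerivAt ψ
      (⟪gradF (x + t • v), v⟫ - ⟪gradF x, v⟫ - L * t * ‖v‖^2) t := by
    intro t
    have h1 := line_hasDerivAt F gradF hdiff x v t
    have h2 : HasDerivAt (fun t : ℝ => t * ⟪gradF x, v⟫) ⟪gradF x, v⟫ t := by
      simpa using (hasDerivAt_id t).mul_const (⟪gradF x, v⟫)
    have h3 : HasDerivAt (fun t : ℝ => L * t^2 / 2 * ‖v‖^2) (L * t * ‖v‖^2) t := by
      have : HasDerivAt (fun t : ℝ => t^2) (2 * t) t := by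
        simpa using hasDerivAt_pow 2 t
      have := ((this.const_mul L).div_const 2).mul_const (‖v‖^2)
      have e : L * t * ‖v‖^2 = L * (2 * t) / 2 * ‖v‖^2 := by ring
      rw [e]; exact this
    have h := (h1.sub h2).sub h3
    exact h
  have hnonpos : ∀ t ∈ Set.Icc (0:ℝ) 1,
      ⟪gradF (x + t • v), v⟫ - ⟪gradF x, v⟫ - L * t * ‖v‖^2 ≤ 0 := by
    intro t ht
    have hb : ⟪gradF (x + t • v) - gradF x, v⟫ ≤ L * t * ‖v‖^2 := by
      calc ⟪gradF (x + t • v) - gradF x, v⟫ ≤ ‖gradF (x + t • v) - gradF x‖ * ‖v‖ :=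
            real_inner_le_norm _ _
        _ ≤ (L * ‖(x + t • v) - x‖) * ‖v‖ := by
            gcongr; exact hsmooth _ _
        _ = L * t * ‖v‖^2 := by
            simp [norm_smul, abs_of_nonneg ht.1]; ring
    have : ⟪gradF (x + t • v) - gradF x, v⟫ = ⟪gradF (x + t • v), v⟫ - ⟪gradF x, v⟫ :=
      inner_sub_left _ _ _
    linarith
  have hanti : AntitoneOn ψ (Set.Icc (0:ℝ) 1) := by
    apply antitoneOn_of_deriv_nonpos (convex_Icc 0 1)
    · exact fun t _ => ((hψ' t).continuousAt.continuousWithinAt)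
    · intro t ht
      exact ((hψ' t).differentiableAt.differentiableWithinAt)
    · intro t ht
      rw [interior_Icc] at ht
      rw [(hψ' t).deriv]
      exact hnonpos t ⟨le_of_lt ht.1, le_of_lt ht.2⟩
  have hkey := hanti (Set.left_mem_Icc.mpr zero_le_one) (Set.right_mem_Icc.mpr zero_le_one)
    zero_le_one
  have h0 : ψ 0 = F x := by
    simp only [hψ, zero_smul, add_zero, zero_mul, sub_zero]
    norm_num
  have h1 : ψ 1 = F y - ⟪gradF x, v⟫ - L / 2 * ‖v‖^2 := by
    have hy : x + (1:ℝ) • v = y := by rw [one_smul, hv]; abel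
    simp only [hψ, hy, one_mul, one_pow, mul_one]
  rw [h0, h1] at hkey
  linarith

/-- Lemma C.2 (one-step gap estimate for AG-OG): for convex `L`-smooth `F`,
monotone `H`, and the Nesterov-style combination step. -/
theorem stmt_2 {n : ℕ} (F : EuclideanSpace ℝ (Fin n) → ℝ)
    (gradF H : EuclideanSpace ℝ (Fin n) → EuclideanSpace ℝ (Fin n))
    (L : ℝ) (hL : 0 < L)
    (hdiff : ∀ x, HasGradientAt F (gradF x) x)
    (hconv : ConvexOn ℝ Set.univ F)
    (hsmooth : ∀ x y, ‖gradF x - gradF y‖ ≤ L * ‖x - y‖)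
    (hmono : ∀ u v, 0 ≤ ⟪H u - H v, u - v⟫)
    (α : ℝ) (hα : α ∈ Set.Ioc (0:ℝ) 1)
    (zag zmd zhalf zk w : EuclideanSpace ℝ (Fin n))
    (hmd : zmd = (1 - α) • zag + α • zk)
    (V : EuclideanSpace ℝ (Fin n) → EuclideanSpace ℝ (Fin n) → ℝ)
    (hV : ∀ z w', V z w' = F z - F w' + ⟪H w', z - w'⟫) :
    V ((1 - α) • zag + α • zhalf) w - (1 - α) * V zag w
      ≤ α * ⟪gradF zmd + H zhalf, zhalf - w⟫ + L * α^2 / 2 * ‖zhalf - zk‖^2 := by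
  obtain ⟨hα0, hα1⟩ := hα
  have h1a : (0:ℝ) ≤ 1 - α := by linarith
  rw [hV, hV]
  set zag' := (1 - α) • zag + α • zhalf with hzag'
  set g := gradF zmd with hg
  have hd : F zag' ≤ F zmd + ⟪g, zag' - zmd⟫ + L / 2 * ‖zag' - zmd‖^2 :=
    descent F gradF L hL hdiff hsmooth zmd zag'
  have hc1 : F zmd + ⟪g, zag - zmd⟫ ≤ F zag := convex_lb F gradF hdiff hconv zmd zag
  have hc2 : F zmd + ⟪g, w - zmd⟫ ≤ F w := convex_lb F gradF hdiff hconv zmd w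
  have e1 : zag' - zmd = α • (zhalf - zk) := by rw [hzag', hmd]; module
  have e2 : ⟪g, zag' - zmd⟫ = α * ⟪g, zhalf - zk⟫ := by rw [e1, real_inner_smul_right]
  have e3 : ‖zag' - zmd‖^2 = α^2 * ‖zhalf - zk‖^2 := by
    rw [e1, norm_smul, mul_pow, Real.norm_eq_abs, sq_abs]
  have hd' : F zag' ≤ F zmd + α * ⟪g, zhalf - zk⟫ + L / 2 * (α^2 * ‖zhalf - zk‖^2) := by
    rw [e2, e3] at hd; exact hd
  have e4 : ⟪H w, zag' - w⟫ = (1 - α) * ⟪H w, zag - w⟫ + α * ⟪H w, zhalf - w⟫ := by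
    have hv : zag' - w = (1 - α) • (zag - w) + α • (zhalf - w) := by rw [hzag']; module
    rw [hv, inner_add_right, real_inner_smul_right, real_inner_smul_right]
  have e5 : α * ⟪g, zhalf - zk⟫ - (1 - α) * ⟪g, zag - zmd⟫ - α * ⟪g, w - zmd⟫
      = α * ⟪g, zhalf - w⟫ := by
    rw [← real_inner_smul_right, ← real_inner_smul_right, ← real_inner_smul_right,
      ← real_inner_smul_right, ← inner_sub_right, ← inner_sub_right]
    congr 1
    rw [hmd]; module
  have hm : ⟪H zhalf, zhalf - w⟫ - ⟪H w, zhalf - w⟫ ≥ 0 := by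
    have := hmono zhalf w
    rwa [inner_sub_left] at this
  have hc1e : (1 - α) * F zmd + (1 - α) * ⟪g, zag - zmd⟫ ≤ (1 - α) * F zag := by
    have h := mul_le_mul_of_nonneg_left hc1 h1a
    rw [mul_add] at h; exact h
  have hc2e : α * F zmd + α * ⟪g, w - zmd⟫ ≤ α * F w := by
    have h := mul_le_mul_of_nonneg_left hc2 (le_of_lt hα0)
    rw [mul_add] at h; exact h
  have hme : α * ⟪H w, zhalf - w⟫ ≤ α * ⟪H zhalf, zhalf - w⟫ := by
    apply mul_le_mul_of_nonneg_left _ (le_of_lt hα0)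
    linarith
  rw [e4, inner_add_left]
  nlinarith [hd', hc1e, hc2e, hme, e5]
end

section
/- Let H : ℝⁿ → ℝⁿ be a monotone L_H-Lipschitz map with H(z*) = 0. Consider the OGDA iteration z_{k+1/2} = z_k - η H(z_{k-1/2}), z_{k+1} = z_k - η H(z_{k+1/2}) with constant stepsize η ≤ 1/(2 L_H) and initialization z_{-1/2} = z_{-3/2} = z_0. Then for all K ≥ 0, ‖z_{K+1} - z*‖² + (1/4)‖z_{K+1/2} - z_{K-1/2}‖² ≤ ‖z_K - z*‖² + (1/4)‖z_{K-1/2} - z_{K-3/2}‖²; consequently ‖z_K - z*‖ ≤ ‖z_0 - z*‖ for all K. -/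
open RealInnerProductSpace

private lemma sq_quarter {x y : ℝ} (hx : 0 ≤ x) (h : x ≤ (1/2) * y) :
    x^2 ≤ (1/4) * y^2 := by nlinarith

/-- Lemma B.1 (last-iterate nonexpansiveness of OGDA): with `zh 0 = z_{-3/2}`,
`zh 1 = z_{-1/2}`, `zh (k+2) = z_{k+1/2}`, the Lyapunov quantity
`‖z_k - z*‖² + (1/4)‖z_{k-1/2} - z_{k-3/2}‖²` is nonincreasing, and
`‖z_K - z*‖ ≤ ‖z_0 - z*‖`. -/
theorem stmt_13 {n : ℕ} (H : EuclideanSpace ℝ (Fin n) → EuclideanSpace ℝ (Fin n))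
    (LH η : ℝ) (hLH : 0 < LH)
    (hmono : ∀ u v, 0 ≤ ⟪H u - H v, u - v⟫)
    (hLip : ∀ u v, ‖H u - H v‖ ≤ LH * ‖u - v‖)
    (zs : EuclideanSpace ℝ (Fin n)) (hzs : H zs = 0)
    (hη0 : 0 ≤ η) (hη : η ≤ 1 / (2 * LH))
    (z zh : ℕ → EuclideanSpace ℝ (Fin n))
    (h0 : zh 0 = z 0) (h1 : zh 1 = z 0)
    (hhalf : ∀ k, zh (k + 2) = z k - η • H (zh (k + 1)))
    (hfull : ∀ k, z (k + 1) = z k - η • H (zh (k + 2))) :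
    (∀ K, ‖z (K + 1) - zs‖^2 + (1/4) * ‖zh (K + 2) - zh (K + 1)‖^2
        ≤ ‖z K - zs‖^2 + (1/4) * ‖zh (K + 1) - zh K‖^2) ∧
    (∀ K, ‖z K - zs‖ ≤ ‖z 0 - zs‖) := by
  have hηL : η * LH ≤ 1/2 := by
    have h2 : 0 < 2 * LH := by linarith
    have := (le_div_iff₀ h2).mp hη
    linarith
  -- key difference identity
  have hdiff : ∀ K, zh (K + 2) - zh (K + 1) = η • (H (zh K) - (2:ℝ) • H (zh (K + 1))) := by
    intro K
    match K with
    | 0 =>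
      rw [hhalf 0, h1, h0]
      module
    | (k+1) =>
      show zh (k + 3) - zh (k + 2) = η • (H (zh (k + 1)) - (2:ℝ) • H (zh (k + 2)))
      set A := H (zh (k + 1)) with hA
      set B := H (zh (k + 2)) with hB
      have e1 : zh (k + 3) = z (k + 1) - η • B := hhalf (k + 1)
      have e2 : zh (k + 2) = z k - η • A := hhalf k
      have e3 : z (k + 1) = z k - η • B := hfull k
      rw [e1, e3, e2]
      module
  have key : ∀ K, ‖z (K + 1) - zs‖^2 + (1/4) * ‖zh (K + 2) - zh (K + 1)‖^2
        ≤ ‖z K - zs‖^2 + (1/4) * ‖zh (K + 1) - zh K‖^2 := by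
    intro K
    set a := z K - zs with ha
    set g := H (zh (K + 2)) with hg
    set g1 := H (zh (K + 1)) with hg1
    set g0 := H (zh K) with hg0
    set d1 := zh (K + 1) - zh K with hd1
    -- vector identities
    have hz1 : z (K + 1) - zs = a - η • g := by rw [hfull K, ha]; module
    have hw : zh (K + 2) - zs = a - η • g1 := by rw [hhalf K, ha]; module
    have hd2 : zh (K + 2) - zh (K + 1) = η • (g0 - (2:ℝ) • g1) := hdiff K
    -- scalar expansions
    have E1 : ‖z (K + 1) - zs‖^2 = ‖a‖^2 - 2*η*⟪g,a⟫ + η^2*‖g‖^2 := by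
      rw [hz1, norm_sub_sq_real, real_inner_smul_right, norm_smul, Real.norm_eq_abs,
        abs_of_nonneg hη0, real_inner_comm]
      ring
    have E2 : ‖zh (K + 2) - zh (K + 1)‖^2 = η^2 * ‖g0 - (2:ℝ) • g1‖^2 := by
      rw [hd2, norm_smul, Real.norm_eq_abs, abs_of_nonneg hη0, mul_pow]
    have E2' : ‖g0 - (2:ℝ) • g1‖^2 = ‖g0‖^2 - 4*⟪g0,g1⟫ + 4*‖g1‖^2 := by
      rw [norm_sub_sq_real, real_inner_smul_right, norm_smul, Real.norm_eq_abs,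
        abs_of_nonneg (by norm_num : (0:ℝ) ≤ 2)]
      ring
    have E3 : ‖g - g1‖^2 = ‖g‖^2 - 2*⟪g,g1⟫ + ‖g1‖^2 := norm_sub_sq_real g g1
    have E4 : ‖g1 - g0‖^2 = ‖g1‖^2 - 2*⟪g0,g1⟫ + ‖g0‖^2 := by
      rw [norm_sub_sq_real, real_inner_comm g1 g0]
    -- monotonicity at (zh (K+2), zs)
    have M1 : η^2 * ⟪g,g1⟫ ≤ η * ⟪g,a⟫ := by
      have hm := hmono (zh (K + 2)) zs
      rw [hzs, sub_zero, hw, inner_sub_right, real_inner_smul_right, ← hg] at hm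
      have h' : η * ⟪g,g1⟫ ≤ ⟪g,a⟫ := by linarith
      have h2 := mul_le_mul_of_nonneg_left h' hη0
      calc η^2 * ⟪g,g1⟫ = η * (η * ⟪g,g1⟫) := by ring
        _ ≤ η * ⟪g,a⟫ := h2
    -- Lipschitz bounds
    have L1 : ‖g - g1‖ ≤ (1/2) * ‖g0 - (2:ℝ) • g1‖ := by
      have h' := hLip (zh (K + 2)) (zh (K + 1))
      rw [hd2, norm_smul, Real.norm_eq_abs, abs_of_nonneg hη0] at h'
      have heq : LH * (η * ‖g0 - (2:ℝ) • g1‖) = (η * LH) * ‖g0 - (2:ℝ) • g1‖ := by ring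
      rw [heq] at h'
      exact h'.trans (mul_le_mul_of_nonneg_right hηL (norm_nonneg _))
    have hs : ‖g - g1‖^2 ≤ (1/4) * ‖g0 - (2:ℝ) • g1‖^2 :=
      sq_quarter (norm_nonneg _) L1
    have F2 : η^2 * ‖g - g1‖^2 ≤ η^2 * ((1/4) * (‖g0‖^2 - 4*⟪g0,g1⟫ + 4*‖g1‖^2)) := by
      rw [← E2']
      exact mul_le_mul_of_nonneg_left hs (sq_nonneg η)
    have L0 : η * ‖g1 - g0‖ ≤ (1/2) * ‖d1‖ := by
      have h' := hLip (zh (K + 1)) (zh K)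
      have h'' := mul_le_mul_of_nonneg_left h' hη0
      rw [← hg1, ← hg0, ← hd1] at h''
      have heq : η * (LH * ‖d1‖) = (η * LH) * ‖d1‖ := by ring
      rw [heq] at h''
      exact h''.trans (mul_le_mul_of_nonneg_right hηL (norm_nonneg _))
    have F3 : η^2 * ‖g1 - g0‖^2 ≤ (1/4) * ‖d1‖^2 := by
      have h2 := sq_quarter (mul_nonneg hη0 (norm_nonneg (g1 - g0))) L0
      rwa [mul_pow] at h2
    have G1 : η^2 * ‖g - g1‖^2 = η^2 * (‖g‖^2 - 2*⟪g,g1⟫ + ‖g1‖^2) := by rw [E3]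
    have G2 : η^2 * ‖g1 - g0‖^2 = η^2 * (‖g1‖^2 - 2*⟪g0,g1⟫ + ‖g0‖^2) := by rw [E4]
    have hn0 : 0 ≤ η^2 * ‖g0‖^2 := by positivity
    rw [E1, E2, E2']
    linarith [M1, G1, G2, F2, F3, hn0]
  refine ⟨key, ?_⟩
  have V0 : ∀ K, ‖z K - zs‖^2 + (1/4) * ‖zh (K + 1) - zh K‖^2
      ≤ ‖z 0 - zs‖^2 + (1/4) * ‖zh 1 - zh 0‖^2 := by
    intro K
    induction K with
    | zero => exact le_refl _
    | succ k ih => exact (key k).trans ih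
  intro K
  have h00 : ‖zh 1 - zh 0‖ = 0 := by rw [h0, h1, sub_self, norm_zero]
  have hK := V0 K
  rw [h00] at hK
  have hsq : ‖z K - zs‖^2 ≤ ‖z 0 - zs‖^2 := by
    have := sq_nonneg ‖zh (K + 1) - zh K‖
    linarith
  exact (pow_le_pow_iff_left₀ (norm_nonneg _) (norm_nonneg _) two_ne_zero).mp hsq
end
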